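/- There exists a group G satisfying condition (2) whose center is trivial and which contains an element of infinite order. (In particular, condition (2) does not imply that G/Z(G) is periodic.) -/

import Mathlib

open DihedralGroup

/-- Rotation predicate. -/
def IsRot {n : ℕ} : DihedralGroup n → Prop
  | DihedralGroup.r _ => True
  | DihedralGroup.sr _ => False

lemma IsRot.mul {n : ℕ} {x y : DihedralGroup n} (hx : IsRot x) (hy : IsRot y) :
    IsRot (x * y) := by
  cases x <;> cases y <;> simp_all [IsRot, r_mul_r]

lemma IsRot.inv {n : ℕ} {x : DihedralGroup n} (hx : IsRot x) : IsRot x⁻¹ := by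
  cases x with
  | r a => exact trivial
  | sr a => exact hx.elim

lemma IsRot.commute {n : ℕ} {x y : DihedralGroup n} (hx : IsRot x) (hy : IsRot y) :
    Commute x y := by
  cases x <;> cases y <;> simp_all [IsRot, Commute, SemiconjBy, r_mul_r, add_comm]

/-- The subgroup of the product of dihedral groups consisting of tuples which are
rotations at all but finitely many coordinates. -/
def G₀ : Subgroup (∀ i : ℕ, DihedralGroup (2 * i + 3)) where
  carrier := {f | {i | ¬ IsRot (f i)}.Finite}
  one_mem' := Set.Finite.subset Set.finite_empty (fun _ hi => (hi trivial).elim)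
  mul_mem' := by
    intro a b ha hb
    refine Set.Finite.subset (ha.union hb) fun i hi => ?_
    simp only [Set.mem_setOf_eq, Pi.mul_apply] at hi
    by_contra hc
    simp only [Set.mem_union, Set.mem_setOf_eq, not_or, not_not] at hc
    exact hi (hc.1.mul hc.2)
  inv_mem' := by
    intro a ha
    refine Set.Finite.subset ha fun i hi => ?_
    simp only [Set.mem_setOf_eq, Pi.inv_apply] at hi ⊢
    intro h
    exact hi (by simpa using h.inv)

lemma center_dihedral {n : ℕ} (x : DihedralGroup (2 * n + 3))
    (hx : ∀ y, x * y = y * x) : x = 1 := by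
  have h2 : ((2 : ℕ) : ZMod (2 * n + 3)) ≠ 0 := by
    rw [Ne, ZMod.natCast_eq_zero_iff]
    intro h
    exact absurd (Nat.le_of_dvd (by norm_num) h) (by omega)
  cases x with
  | r j =>
    have hy := hx (DihedralGroup.sr 0)
    simp only [r_mul_sr, sr_mul_r, zero_sub, zero_add] at hy
    have hj : -j = j := by injection hy
    have h2j : (2 : ZMod (2 * n + 3)) * j = 0 := by linear_combination -hj
    have hu : IsUnit ((2 : ℕ) : ZMod (2 * n + 3)) := by
      rw [ZMod.isUnit_iff_coprime]
      exact Nat.coprime_two_left.mpr ⟨n + 1, by ring⟩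
    rw [one_def]
    exact congrArg _ (hu.mul_right_eq_zero.mp (by simpa using h2j))
  | sr j =>
    have hy := hx (DihedralGroup.r 1)
    simp only [sr_mul_r, r_mul_sr] at hy
    have hj : j + 1 = j - 1 := by injection hy
    exact absurd (by push_cast; linear_combination hj) h2

theorem exists_cond2_trivial_center_infinite_order :
    ∃ (G : Type) (_ : Group G),
      (∀ g h : G, ∃ n : ℕ, 0 < n ∧ g * h ^ n = h ^ n * g) ∧
      Subgroup.center G = ⊥ ∧
      ∃ g : G, ¬ IsOfFinOrder g := by
  refine ⟨G₀, inferInstance, ?_, ?_, ?_⟩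
  · -- condition (2)
    intro g h
    set S : Set ℕ := {i | ¬ IsRot ((g : ∀ i, DihedralGroup (2*i+3)) i)} ∪
      {i | ¬ IsRot ((h : ∀ i, DihedralGroup (2*i+3)) i)} with hS
    have hSfin : S.Finite := (g.2).union (h.2)
    refine ⟨∏ i ∈ hSfin.toFinset, orderOf ((h : ∀ i, DihedralGroup (2*i+3)) i), ?_, ?_⟩
    · exact Finset.prod_pos fun i _ => orderOf_pos _
    · ext i
      simp only [Subgroup.coe_mul, SubmonoidClass.coe_pow, Pi.mul_apply, Pi.pow_apply]
      by_cases hi : i ∈ S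
      · have hdvd : orderOf ((h : ∀ i, DihedralGroup (2*i+3)) i) ∣
            ∏ i ∈ hSfin.toFinset, orderOf ((h : ∀ i, DihedralGroup (2*i+3)) i) :=
          Finset.dvd_prod_of_mem _ (hSfin.mem_toFinset.mpr hi)
        rw [orderOf_dvd_iff_pow_eq_one.mp hdvd, mul_one, one_mul]
      · simp only [hS, Set.mem_union, Set.mem_setOf_eq, not_or, not_not] at hi
        exact (IsRot.commute hi.1 hi.2).pow_right _
  · -- trivial center
    rw [Subgroup.eq_bot_iff_forall]
    intro z hz
    rw [Subgroup.mem_center_iff] at hz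
    ext i
    simp only [OneMemClass.coe_one, Pi.one_apply]
    apply center_dihedral
    intro y
    have hmem : Pi.mulSingle (M := fun i => DihedralGroup (2*i+3)) i y ∈ G₀ := by
      refine Set.Finite.subset (Set.finite_singleton i) fun k hk => ?_
      simp only [Set.mem_setOf_eq] at hk
      by_contra hki
      rw [Pi.mulSingle_eq_of_ne (by simpa using hki)] at hk
      exact hk trivial
    have h1 := hz ⟨Pi.mulSingle (M := fun i => DihedralGroup (2*i+3)) i y, hmem⟩
    have h2 := congrArg (fun w : G₀ => (w : ∀ i, DihedralGroup (2*i+3)) i) h1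
    simpa [Pi.mulSingle_eq_same] using h2.symm
  · -- infinite order element
    refine ⟨⟨fun i => DihedralGroup.r 1,
      Set.Finite.subset Set.finite_empty (fun _ hi => (hi trivial).elim)⟩, ?_⟩
    intro hfin
    obtain ⟨m, hm, hpow⟩ := (isOfFinOrder_iff_pow_eq_one).mp hfin
    have h1 := congrArg (fun w : G₀ => (w : ∀ i, DihedralGroup (2*i+3)) m) hpow
    simp only [SubmonoidClass.coe_pow, Pi.pow_apply, OneMemClass.coe_one,
      Pi.one_apply] at h1
    rw [r_one_pow, one_def] at h1
    have hm' : ((m : ℕ) : ZMod (2 * m + 3)) = 0 := by injection h1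
    rw [ZMod.natCast_eq_zero_iff] at hm'
    have := Nat.le_of_dvd hm hm'
    omega
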